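/- For every countable indexed collection C = {L_1, L_2, ...} of infinite languages over U, there exists a generating algorithm such that for every index i* and every enumeration of L_{i*} presented as input, the algorithm's output z_t belongs to L_{i*} \ S_t for all t satisfying |S_t| ≥ max(i*, m_C(L_{i*}) + 1). -/
import Mathlib

/-!
STATEMENT 1: For every countable indexed collection C = {L_0, L_1, ...} of infinite
languages over U, there is a generating algorithm such that for every index i and every
enumeration of L_i presented as input, the output z_t belongs to L_i \ S_t for all t
with |S_t| ≥ max(i+1, m_C(L_i) + 1).  (Indices here are 0-based, so the language at
index `i` is the (i+1)-st language of the collection, whence the bound `i + 1`.)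
-/

/-- `x` is an enumeration of the language `K`. -/
def IsEnumerationOf {U : Type} (K : Set U) (x : ℕ → U) : Prop :=
  (∀ t, x t ∈ K) ∧ ∀ w ∈ K, ∃ t, x t = w

/-- The set `S_t` of distinct strings among the first `t` inputs. -/
def seen {U : Type} (x : ℕ → U) (t : ℕ) : Set U := x '' {i | i < t}

/-- The input prefix `(x_1, ..., x_t)` as a list. -/
def inputList {U : Type} (x : ℕ → U) (t : ℕ) : List U :=
  List.ofFn (fun i : Fin t => x i)

/-- The non-uniform complexity `m_C(L_i)`: the maximum cardinality of a finite
intersection `⋂_{L ∈ C'} L` over subcollections `C'` of the first `i+1` languages that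
contain `L_i`; the supremum of the empty set of values is `0`. -/
noncomputable def mC {U : Type} (L : ℕ → Set U) (i : ℕ) : ℕ :=
  sSup {n : ℕ | ∃ I : Finset ℕ, (∀ j ∈ I, j ≤ i) ∧ i ∈ I ∧
    (⋂ j ∈ I, L j).Finite ∧ n = (⋂ j ∈ I, L j).ncard}

open Classical in
/-- Intersection of the languages among the first `k+1` that contain `S`. -/
noncomputable def Tset {U : Type} (L : ℕ → Set U) (S : Set U) (k : ℕ) : Set U :=
  ⋂ j ∈ {j : ℕ | j ≤ k ∧ S ⊆ L j}, L j

open Classical in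
noncomputable def kstar {U : Type} (L : ℕ → Set U) (l : List U) : ℕ :=
  Nat.findGreatest (fun k => (Tset L {a | a ∈ l} k).Infinite) (l.toFinset.card - 1)

open Classical in
noncomputable def algo {U : Type} [Infinite U] (L : ℕ → Set U) (l : List U) : U :=
  if h : (Tset L {a | a ∈ l} (kstar L l) \ {a | a ∈ l}).Nonempty then h.choose
  else Classical.arbitrary U

lemma subset_Tset {U : Type} (L : ℕ → Set U) (S : Set U) (k : ℕ) : S ⊆ Tset L S k := by
  intro a ha
  simp only [Tset, Set.mem_iInter, Set.mem_setOf_eq]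
  rintro j ⟨-, hj⟩
  exact hj ha

lemma mC_ge {U : Type} (L : ℕ → Set U) (i : ℕ) (I : Finset ℕ)
    (hI : ∀ j ∈ I, j ≤ i) (hiI : i ∈ I) (hfin : (⋂ j ∈ I, L j).Finite) :
    (⋂ j ∈ I, L j).ncard ≤ mC L i := by
  apply le_csSup
  · apply Set.Finite.bddAbove
    apply Set.Finite.subset
      (Set.Finite.image (fun J : Finset ℕ => (⋂ j ∈ J, L j).ncard)
        (Finset.range (i + 1)).powerset.finite_toSet)
    rintro n ⟨J, hJ, -, -, rfl⟩
    exact ⟨J, by simp only [Finset.coe_powerset, Set.mem_preimage, Set.mem_powerset_iff,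
      Finset.coe_subset, Finset.subset_iff, Finset.mem_coe, Finset.mem_range,
      Nat.lt_succ_iff] ; exact hJ, rfl⟩
  · exact ⟨I, hI, hiI, hfin, rfl⟩

theorem nonuniform_generation_with_complexity_bound
    (U : Type) [Countable U] [Infinite U]
    (L : ℕ → Set U) (hL : ∀ i, (L i).Infinite) :
    ∃ A : List U → U, ∀ i : ℕ,
      ∀ x : ℕ → U, IsEnumerationOf (L i) x →
        ∀ t : ℕ, max (i + 1) (mC L i + 1) ≤ (seen x t).ncard →
          A (inputList x t) ∈ L i \ seen x t := by
  classical
  refine ⟨algo L, ?_⟩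
  intro i x henum t hcard
  set l := inputList x t with hl
  have hSset : {a | a ∈ l} = seen x t := by
    ext a
    simp only [hl, inputList, Set.mem_setOf_eq, List.mem_ofFn, seen, Set.mem_image,
      Set.mem_setOf_eq]
    constructor
    · rintro ⟨⟨s, hs⟩, rfl⟩; exact ⟨s, hs, rfl⟩
    · rintro ⟨s, hs, rfl⟩; exact ⟨⟨s, hs⟩, rfl⟩
  set S : Set U := {a | a ∈ l} with hSdef
  have hSfin : S.Finite := (List.finite_toSet l)
  have hSL : S ⊆ L i := by
    rw [hSset]
    rintro a ⟨s, -, rfl⟩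
    exact henum.1 s
  have hn : l.toFinset.card = S.ncard := by
    rw [hSdef]
    rw [show ({a | a ∈ l} : Set U) = ↑l.toFinset by ext a; simp]
    rw [Set.ncard_coe_finset]
  have hcard' : max (i + 1) (mC L i + 1) ≤ S.ncard := by rwa [hSset]
  have hi1 : i + 1 ≤ S.ncard := le_trans (le_max_left _ _) hcard'
  have hm1 : mC L i + 1 ≤ S.ncard := le_trans (le_max_right _ _) hcard'
  -- T i is infinite
  have hTi : (Tset L S i).Infinite := by
    by_contra hfin
    rw [Set.not_infinite] at hfin
    set I : Finset ℕ := (Finset.range (i + 1)).filter (fun j => S ⊆ L j) with hI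
    have hEq : (⋂ j ∈ I, L j) = Tset L S i := by
      unfold Tset
      apply le_antisymm <;> intro a ha <;> simp only [Set.mem_iInter, Set.mem_setOf_eq,
        hI, Finset.mem_filter, Finset.mem_range, Nat.lt_succ_iff] at ha ⊢
      · rintro j ⟨h1, h2⟩; exact ha j ⟨h1, h2⟩
      · rintro j ⟨h1, h2⟩; exact ha j ⟨h1, h2⟩
    have hle : (⋂ j ∈ I, L j).ncard ≤ mC L i := by
      apply mC_ge L i I
      · intro j hj
        simp only [hI, Finset.mem_filter, Finset.mem_range, Nat.lt_succ_iff] at hj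
        exact hj.1
      · simp only [hI, Finset.mem_filter, Finset.mem_range]
        exact ⟨Nat.lt_succ_self i, hSL⟩
      · rw [hEq]; exact hfin
    have hSle : S.ncard ≤ (⋂ j ∈ I, L j).ncard := by
      apply Set.ncard_le_ncard _ (hEq ▸ hfin)
      rw [hEq]; exact subset_Tset L S i
    omega
  -- kstar properties
  set k := kstar L l with hk
  have hik : i ≤ k := by
    apply Nat.le_findGreatest _ hTi
    omega
  have hTk : (Tset L S k).Infinite := by
    exact Nat.findGreatest_spec (P := fun k => (Tset L S k).Infinite) (by omega) hTi
  have hne : (Tset L S k \ S).Nonempty := (hTk.diff hSfin).nonempty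
  have halgo : algo L l = hne.choose := by
    rw [algo, dif_pos hne]
  have hspec := hne.choose_spec
  rw [halgo]
  constructor
  · have : hne.choose ∈ Tset L S k := hspec.1
    simp only [Tset, Set.mem_iInter, Set.mem_setOf_eq] at this
    exact this i ⟨hik, hSL⟩
  · rw [← hSset]; exact hspec.2
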